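/- Let A be a congruence-distributive algebra and θ ∈ Con(A). Then for every factor congruence ψ ∈ FC(A), the congruence (ψ ∨ θ)/θ of the quotient algebra A/θ is a factor congruence of A/θ; that is, u_θ(FC(A)) ⊆ FC(A/θ), where u_θ : Con(A) → Con(A/θ) is defined by u_θ(α) = (α ∨ θ)/θ. -/

import Mathlib

/-! Universal-algebra framework: algebras over a signature, congruences,
factor congruences, lifting properties. -/

structure Signature where
  ops : Type
  arity : ops → ℕ

structure Alg (σ : Signature) where
  carrier : Type
  interp : ∀ f : σ.ops, (Fin (σ.arity f) → carrier) → carrier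

namespace Alg

variable {σ : Signature}

/-- A congruence: an equivalence relation compatible with all operations. -/
def IsCon (A : Alg σ) (r : A.carrier → A.carrier → Prop) : Prop :=
  Equivalence r ∧
    ∀ (f : σ.ops) (x y : Fin (σ.arity f) → A.carrier),
      (∀ i, r (x i) (y i)) → r (A.interp f x) (A.interp f y)

/-- The least congruence `Δ_A`. -/
def delta (A : Alg σ) : A.carrier → A.carrier → Prop := fun a b => a = b

/-- The greatest congruence `∇_A = A²`. -/
def nabla (A : Alg σ) : A.carrier → A.carrier → Prop := fun _ _ => True

/-- Meet (intersection) of congruences. -/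
def conMeet (A : Alg σ) (r s : A.carrier → A.carrier → Prop) :
    A.carrier → A.carrier → Prop := fun a b => r a b ∧ s a b

/-- Join of congruences: the least congruence containing both. -/
def conJoin (A : Alg σ) (r s : A.carrier → A.carrier → Prop) :
    A.carrier → A.carrier → Prop := fun a b =>
  ∀ t, A.IsCon t → (∀ x y, r x y → t x y) → (∀ x y, s x y → t x y) → t a b

/-- The congruence generated by a set of pairs. -/
def conGen (A : Alg σ) (X : Set (A.carrier × A.carrier)) :
    A.carrier → A.carrier → Prop := fun a b =>
  ∀ t, A.IsCon t → (∀ p ∈ X, t p.1 p.2) → t a b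

/-- Composition of relations: `(a,b) ∈ comp r s` iff `(a,x) ∈ s` and `(x,b) ∈ r`
for some `x`. -/
def comp (A : Alg σ) (r s : A.carrier → A.carrier → Prop) :
    A.carrier → A.carrier → Prop := fun a b => ∃ x, s a x ∧ r x b

/-- Factor congruences: congruences `φ` having a congruence `φ*` with
`φ ∨ φ* = ∇`, `φ ∩ φ* = Δ` and `φ ∘ φ* = φ* ∘ φ`. -/
def IsFC (A : Alg σ) (φ : A.carrier → A.carrier → Prop) : Prop :=
  A.IsCon φ ∧ ∃ ψ, A.IsCon ψ ∧ A.conJoin φ ψ = A.nabla ∧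
    A.conMeet φ ψ = A.delta ∧ A.comp φ ψ = A.comp ψ φ

/-- Boolean congruences: complemented elements of the lattice `Con(A)`. -/
def IsBooleanCon (A : Alg σ) (φ : A.carrier → A.carrier → Prop) : Prop :=
  A.IsCon φ ∧ ∃ ψ, A.IsCon ψ ∧ A.conJoin φ ψ = A.nabla ∧ A.conMeet φ ψ = A.delta

/-- `A` is congruence-distributive iff the lattice `Con(A)` is distributive. -/
def CongDistrib (A : Alg σ) : Prop :=
  ∀ r s t, A.IsCon r → A.IsCon s → A.IsCon t →
    A.conMeet r (A.conJoin s t) = A.conJoin (A.conMeet r s) (A.conMeet r t)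

/-- `A` is congruence-permutable iff all congruences permute under composition. -/
def CongPermutable (A : Alg σ) : Prop :=
  ∀ r s, A.IsCon r → A.IsCon s → A.comp r s = A.comp s r

/-- Arithmetical = congruence-distributive + congruence-permutable. -/
def Arithmetical (A : Alg σ) : Prop := A.CongDistrib ∧ A.CongPermutable

/-- The quotient algebra `A/θ`. -/
noncomputable def quotAlg (A : Alg σ) (θ : A.carrier → A.carrier → Prop) :
    Alg σ where
  carrier := Quot θ
  interp f x := Quot.mk θ (A.interp f fun i => (x i).out)

/-- The image `α/θ = {(a/θ, b/θ) : (a,b) ∈ α}` of a relation in the quotient. -/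
def quotRel (A : Alg σ) (θ α : A.carrier → A.carrier → Prop) :
    Quot θ → Quot θ → Prop := fun x y =>
  ∃ a b, x = Quot.mk θ a ∧ y = Quot.mk θ b ∧ α a b

/-- `θ` has the Factor Congruence Lifting Property: the Boolean morphism
`FC(θ) : FC(A) → FC(A/θ)`, `ψ ↦ (ψ ∨ θ)/θ`, is surjective. -/
def HasFCLP (A : Alg σ) (θ : A.carrier → A.carrier → Prop) : Prop :=
  ∀ γ, (A.quotAlg θ).IsFC γ →
    ∃ ψ, A.IsFC ψ ∧ A.quotRel θ (A.conJoin ψ θ) = γ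

/-- `θ` has the Congruence Boolean Lifting Property: the Boolean morphism
`B(Con(A)) → B(Con(A/θ))`, `ψ ↦ (ψ ∨ θ)/θ`, is surjective. -/
def HasCBLP (A : Alg σ) (θ : A.carrier → A.carrier → Prop) : Prop :=
  ∀ γ, (A.quotAlg θ).IsBooleanCon γ →
    ∃ ψ, A.IsBooleanCon ψ ∧ A.quotRel θ (A.conJoin ψ θ) = γ

/-- `A` has FCLP iff every congruence of `A` has FCLP. -/
def AlgFCLP (A : Alg σ) : Prop := ∀ θ, A.IsCon θ → A.HasFCLP θ

/-- `A` has CBLP iff every congruence of `A` has CBLP. -/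
def AlgCBLP (A : Alg σ) : Prop := ∀ θ, A.IsCon θ → A.HasCBLP θ

/-- FC-normality. -/
def FCNormal (A : Alg σ) : Prop :=
  ∀ φ ψ, A.IsCon φ → A.IsCon ψ → A.comp φ ψ = A.nabla →
    ∃ α β, A.IsFC α ∧ A.IsFC β ∧ A.conMeet α β = A.delta ∧
      A.comp φ α = A.nabla ∧ A.comp ψ β = A.nabla

/-- B-normality. -/
def BNormal (A : Alg σ) : Prop :=
  ∀ φ ψ, A.IsCon φ → A.IsCon ψ → A.conJoin φ ψ = A.nabla →
    ∃ α β, A.IsBooleanCon α ∧ A.IsBooleanCon β ∧ A.conMeet α β = A.delta ∧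
      A.conJoin φ α = A.nabla ∧ A.conJoin ψ β = A.nabla

/-- Isomorphism of algebras. -/
def Iso (A B : Alg σ) : Prop :=
  ∃ e : A.carrier ≃ B.carrier,
    ∀ (f : σ.ops) (x : Fin (σ.arity f) → A.carrier),
      e (A.interp f x) = B.interp f fun i => e (x i)

/-- Direct product of a finite family of algebras. -/
def prodAlg {n : ℕ} (B : Fin n → Alg σ) : Alg σ where
  carrier := ∀ i, (B i).carrier
  interp f x := fun i => (B i).interp f fun j => x j i

/-- The product congruence `θ₁ × … × θₙ`. -/
def prodRel {n : ℕ} (B : Fin n → Alg σ)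
    (θ : ∀ i, (B i).carrier → (B i).carrier → Prop) :
    (prodAlg B).carrier → (prodAlg B).carrier → Prop :=
  fun x y => ∀ i, θ i (x i) (y i)

/-- Maximal congruences: maximal elements of `(Con(A) \ {∇}, ⊆)`. -/
def IsMaxCon (A : Alg σ) (θ : A.carrier → A.carrier → Prop) : Prop :=
  A.IsCon θ ∧ θ ≠ A.nabla ∧
    ∀ ψ, A.IsCon ψ → ψ ≠ A.nabla → (∀ a b, θ a b → ψ a b) → ψ = θ

/-- Prime congruences. -/
def IsPrimeCon (A : Alg σ) (θ : A.carrier → A.carrier → Prop) : Prop :=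
  A.IsCon θ ∧ ∀ α β, A.IsCon α → A.IsCon β →
    (∀ a b, α a b → β a b → θ a b) →
    (∀ a b, α a b → θ a b) ∨ ∀ a b, β a b → θ a b

end Alg


namespace AuxFC

open Alg

variable {σ : Signature}

theorem conJoin_isCon (A : Alg σ) (r s : A.carrier → A.carrier → Prop) :
    A.IsCon (A.conJoin r s) := by
  refine ⟨⟨?_, ?_, ?_⟩, ?_⟩
  · intro a t ht _ _; exact ht.1.refl a
  · intro a b h t ht hr hs; exact ht.1.symm (h t ht hr hs)
  · intro a b c h1 h2 t ht hr hs; exact ht.1.trans (h1 t ht hr hs) (h2 t ht hr hs)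
  · intro f x y h t ht hr hs
    exact ht.2 f x y (fun i => h i t ht hr hs)

theorem conJoin_left {A : Alg σ} {r s : A.carrier → A.carrier → Prop} {a b}
    (h : r a b) : A.conJoin r s a b := fun _ _ hr _ => hr a b h

theorem conJoin_right {A : Alg σ} {r s : A.carrier → A.carrier → Prop} {a b}
    (h : s a b) : A.conJoin r s a b := fun _ _ _ hs => hs a b h

theorem mk_eq_iff {A : Alg σ} {θ : A.carrier → A.carrier → Prop}
    (hθ : A.IsCon θ) {a b : A.carrier} :
    Quot.mk θ a = Quot.mk θ b ↔ θ a b := by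
  constructor
  · intro h; exact hθ.1.eqvGen_iff.mp (Quot.eqvGen_exact h)
  · exact Quot.sound

theorem quotRel_isCon {A : Alg σ} {θ α : A.carrier → A.carrier → Prop}
    (hθ : A.IsCon θ) (hα : A.IsCon α) (hsub : ∀ a b, θ a b → α a b) :
    (A.quotAlg θ).IsCon (A.quotRel θ α) := by
  refine ⟨⟨?_, ?_, ?_⟩, ?_⟩
  · intro x
    induction x using Quot.ind with
    | _ a => exact ⟨a, a, rfl, rfl, hα.1.refl a⟩
  · rintro x y ⟨a, b, rfl, rfl, hab⟩
    exact ⟨b, a, rfl, rfl, hα.1.symm hab⟩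
  · rintro x y z ⟨a, b, rfl, hy, hab⟩ ⟨b', c, hy', rfl, hbc⟩
    refine ⟨a, c, rfl, rfl, hα.1.trans hab (hα.1.trans ?_ hbc)⟩
    exact hsub _ _ ((mk_eq_iff hθ).mp (hy ▸ hy'))
  · intro f x y h
    refine ⟨A.interp f (fun i => (x i).out), A.interp f (fun i => (y i).out),
      rfl, rfl, hα.2 f _ _ ?_⟩
    intro i
    obtain ⟨a, b, hxa, hyb, hab⟩ := h i
    have h1 : θ (x i).out a := (mk_eq_iff hθ).mp ((Quot.out_eq (x i)).trans hxa)
    have h2 : θ b (y i).out := (mk_eq_iff hθ).mp (hyb.symm.trans (Quot.out_eq (y i)).symm)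
    exact hα.1.trans (hsub _ _ h1) (hα.1.trans hab (hsub _ _ h2))

/-- From FC data, the complement permutes to give `∇ = ψ ∘ ψ*`. -/
theorem comp_all {A : Alg σ} {ψ ψs : A.carrier → A.carrier → Prop}
    (hψ : A.IsCon ψ) (hψs : A.IsCon ψs)
    (hjoin : A.conJoin ψ ψs = A.nabla)
    (hperm : A.comp ψ ψs = A.comp ψs ψ) :
    ∀ a b, ∃ x, ψs a x ∧ ψ x b := by
  have hcon : A.IsCon (A.comp ψ ψs) := by
    refine ⟨⟨?_, ?_, ?_⟩, ?_⟩
    · intro a; exact ⟨a, hψs.1.refl a, hψ.1.refl a⟩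
    · rintro a b ⟨x, hax, hxb⟩
      have : A.comp ψs ψ b a := ⟨x, hψ.1.symm hxb, hψs.1.symm hax⟩
      rw [hperm]; exact this
    · rintro a b c ⟨x, hax, hxb⟩ ⟨y, hby, hyc⟩
      have hxy : A.comp ψs ψ x y := ⟨b, hxb, hby⟩
      rw [← hperm] at hxy
      obtain ⟨z, hxz, hzy⟩ := hxy
      exact ⟨z, hψs.1.trans hax hxz, hψ.1.trans hzy hyc⟩
    · rintro f x y h
      choose z hz1 hz2 using h
      exact ⟨A.interp f z, hψs.2 f x z hz1, hψ.2 f z y hz2⟩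
  intro a b
  have : A.conJoin ψ ψs a b := by rw [hjoin]; trivial
  exact this _ hcon (fun u v h => ⟨u, hψs.1.refl u, h⟩)
    (fun u v h => ⟨v, h, hψ.1.refl v⟩)

end AuxFC

/-- `u_θ(FC(A)) ⊆ FC(A/θ)`: for every factor congruence `ψ` of `A`,
`(ψ ∨ θ)/θ` is a factor congruence of `A/θ`. -/
theorem stmt_1 {σ : Signature} (A : Alg σ) (hne : Nonempty A.carrier)
    (hcd : A.CongDistrib) (θ : A.carrier → A.carrier → Prop)
    (hθ : A.IsCon θ) :
    ∀ ψ, A.IsFC ψ → (A.quotAlg θ).IsFC (A.quotRel θ (A.conJoin ψ θ)) := by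
  rintro ψ ⟨hψ, ψs, hψs, hjoin, hmeet, hperm⟩
  have hβ : A.IsCon (A.conJoin ψ θ) := AuxFC.conJoin_isCon A ψ θ
  have hβs : A.IsCon (A.conJoin ψs θ) := AuxFC.conJoin_isCon A ψs θ
  have hθβ : ∀ a b, θ a b → A.conJoin ψ θ a b := fun _ _ h => AuxFC.conJoin_right h
  have hθβs : ∀ a b, θ a b → A.conJoin ψs θ a b := fun _ _ h => AuxFC.conJoin_right h
  have hγ := AuxFC.quotRel_isCon hθ hβ hθβ
  have hγs := AuxFC.quotRel_isCon hθ hβs hθβs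
  have hall := AuxFC.comp_all hψ hψs hjoin hperm
  set γ := A.quotRel θ (A.conJoin ψ θ) with hγdef
  set γs := A.quotRel θ (A.conJoin ψs θ) with hγsdef
  -- key meet fact: (ψ ∨ θ) ∩ (ψ* ∨ θ) ⊆ θ
  have step1 : ∀ u v, A.conMeet ψ (A.conJoin ψs θ) u v → θ u v := by
    intro u v huv
    rw [hcd ψ ψs θ hψ hψs hθ] at huv
    refine huv θ hθ (fun x y hxy => ?_) (fun x y hxy => hxy.2)
    have hd : A.delta x y := by rw [← hmeet]; exact hxy
    exact hd ▸ hθ.1.refl x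
  have hkey : ∀ a b, A.conJoin ψ θ a b → A.conJoin ψs θ a b → θ a b := by
    intro a b h1 h2
    have h3 : A.conMeet (A.conJoin ψs θ) (A.conJoin ψ θ) a b := ⟨h2, h1⟩
    rw [hcd _ ψ θ hβs hψ hθ] at h3
    exact h3 θ hθ (fun x y hxy => step1 x y ⟨hxy.2, hxy.1⟩) (fun x y hxy => hxy.2)
  refine ⟨hγ, γs, hγs, ?_, ?_, ?_⟩
  · -- join is nabla
    have hj : ∀ (x y : Quot θ), (A.quotAlg θ).conJoin γ γs x y := by
      intro x y
      induction x using Quot.ind with | _ a => ?_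
      induction y using Quot.ind with | _ b => ?_
      intro t ht h1 h2
      obtain ⟨c, hac, hcb⟩ := hall a b
      exact ht.1.trans (h2 _ _ ⟨a, c, rfl, rfl, AuxFC.conJoin_left hac⟩)
        (h1 _ _ ⟨c, b, rfl, rfl, AuxFC.conJoin_left hcb⟩)
    funext x y
    exact propext ⟨fun _ => trivial, fun _ => hj x y⟩
  · -- meet is delta
    have hm : ∀ (x y : Quot θ), (A.quotAlg θ).conMeet γ γs x y → x = y := by
      intro x y h
      induction x using Quot.ind with | _ a => ?_
      induction y using Quot.ind with | _ b => ?_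
      obtain ⟨⟨a1, b1, ha1, hb1, h1⟩, ⟨a2, b2, ha2, hb2, h2⟩⟩ := h
      have e1 : A.conJoin ψ θ a b :=
        hβ.1.trans (AuxFC.conJoin_right ((AuxFC.mk_eq_iff hθ).mp ha1))
          (hβ.1.trans h1
            (AuxFC.conJoin_right (hθ.1.symm ((AuxFC.mk_eq_iff hθ).mp hb1))))
      have e2 : A.conJoin ψs θ a b :=
        hβs.1.trans (AuxFC.conJoin_right ((AuxFC.mk_eq_iff hθ).mp ha2))
          (hβs.1.trans h2
            (AuxFC.conJoin_right (hθ.1.symm ((AuxFC.mk_eq_iff hθ).mp hb2))))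
      exact Quot.sound (hkey a b e1 e2)
    funext x y
    exact propext ⟨hm x y, fun h => h ▸ ⟨hγ.1.refl x, hγs.1.refl x⟩⟩
  · -- compositions agree (both are nabla)
    have hc1 : ∀ (x y : Quot θ), (A.quotAlg θ).comp γ γs x y := by
      intro x y
      induction x using Quot.ind with | _ a => ?_
      induction y using Quot.ind with | _ b => ?_
      obtain ⟨c, hac, hcb⟩ := hall a b
      exact ⟨Quot.mk θ c, ⟨a, c, rfl, rfl, AuxFC.conJoin_left hac⟩,
        ⟨c, b, rfl, rfl, AuxFC.conJoin_left hcb⟩⟩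
    have hc2 : ∀ (x y : Quot θ), (A.quotAlg θ).comp γs γ x y := by
      intro x y
      induction x using Quot.ind with | _ a => ?_
      induction y using Quot.ind with | _ b => ?_
      have h' : A.comp ψs ψ a b := by rw [← hperm]; exact hall a b
      obtain ⟨c, hac, hcb⟩ := h'
      exact ⟨Quot.mk θ c, ⟨a, c, rfl, rfl, AuxFC.conJoin_left hac⟩,
        ⟨c, b, rfl, rfl, AuxFC.conJoin_left hcb⟩⟩
    funext x y
    exact propext (iff_of_true (hc1 x y) (hc2 x y))
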